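/- Let Y be a compact metric space equipped with a finite Borel measure μ with μ(Y) > 0, let Z be a metric space, and let f, g : Y → Z be Lipschitz maps with β > 0 and d_L(f_*μ, g_*μ) ≤ β. Suppose in addition that σ : Y → Y is a measure-preserving isometry with σ∘σ∘σ = id acting freely (σ(y) ≠ y and σ(σ(y)) ≠ y for all y). Then there exist a nonempty finite set Ỹ, a map p : Ỹ → Y, a bijection φ : Ỹ → Ỹ, and a bijection σ̃ : Ỹ → Ỹ with σ̃∘σ̃∘σ̃ = id, such that p∘σ̃ = σ∘p and dist(f(p(ỹ)), g(p(φ(ỹ)))) ≤ 2β for every ỹ ∈ Ỹ. -/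

import Mathlib

open MeasureTheory

lemma sigmaFinEq {I : Type*} {n : I → ℕ} {J K : I} (h : J = K) {a : Fin (n J)} {b : Fin (n K)}
    (hv : (a : ℕ) = b) : (⟨J, a⟩ : Σ i, Fin (n i)) = ⟨K, b⟩ := by
  subst h; exact congrArg _ (Fin.ext hv)

/-- Simultaneous Dirichlet approximation via pigeonhole. -/
lemma simul_approx {ι : Type*} [Fintype ι] (w : ι → ℝ) (hw : ∀ i, 0 ≤ w i) (Q : ℕ) (hQ : 0 < Q) :
    ∃ N : ℕ, 0 < N ∧ ∃ n : ι → ℕ, (∀ i, |(n i : ℝ) - N * w i| < 1/Q) ∧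
      ∀ i j, w i = w j → n i = n j := by
  classical
  have hQR : (0:ℝ) < Q := by exact_mod_cast hQ
  set d := Fintype.card ι with hd
  set F : ℕ → (ι → Fin Q) := fun N i =>
    ⟨⌊Int.fract ((N:ℝ) * w i) * Q⌋₊, by
      rw [Nat.floor_lt (mul_nonneg (Int.fract_nonneg _) hQR.le)]
      have := Int.fract_lt_one ((N:ℝ) * w i)
      nlinarith⟩ with hF
  have key : ∀ a b : ℕ, a < b → F a = F b → ∃ N : ℕ, 0 < N ∧ ∃ n : ι → ℕ,
      (∀ i, |(n i : ℝ) - N * w i| < 1/Q) ∧ ∀ i j, w i = w j → n i = n j := by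
    intro a b hlt hFab
    refine ⟨b - a, Nat.sub_pos_of_lt hlt, fun i => ⌊(b:ℝ) * w i⌋₊ - ⌊(a:ℝ) * w i⌋₊, ?_, ?_⟩
    · intro i
      have hab' : (a:ℝ) * w i ≤ (b:ℝ) * w i :=
        mul_le_mul_of_nonneg_right (by exact_mod_cast hlt.le) (hw i)
      have hfl : ⌊(a:ℝ) * w i⌋₊ ≤ ⌊(b:ℝ) * w i⌋₊ := Nat.floor_le_floor hab'
      have hcast : ((⌊(b:ℝ) * w i⌋₊ - ⌊(a:ℝ) * w i⌋₊ : ℕ) : ℝ)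
          = (⌊(b:ℝ) * w i⌋₊ : ℝ) - (⌊(a:ℝ) * w i⌋₊ : ℝ) := by
        push_cast [Nat.cast_sub hfl]; ring
      have hNcast : (((b - a : ℕ)) : ℝ) = (b:ℝ) - a := by
        push_cast [Nat.cast_sub hlt.le]; ring
      have hxa : 0 ≤ (a:ℝ) * w i := mul_nonneg (Nat.cast_nonneg a) (hw i)
      have hxb : 0 ≤ (b:ℝ) * w i := mul_nonneg (Nat.cast_nonneg b) (hw i)
      have hfa : (⌊(a:ℝ) * w i⌋₊ : ℝ) = (a:ℝ) * w i - Int.fract ((a:ℝ) * w i) := by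
        rw [natCast_floor_eq_intCast_floor hxa]; rw [Int.self_sub_fract]
      have hfb : (⌊(b:ℝ) * w i⌋₊ : ℝ) = (b:ℝ) * w i - Int.fract ((b:ℝ) * w i) := by
        rw [natCast_floor_eq_intCast_floor hxb]; rw [Int.self_sub_fract]
      -- same box
      have hbox : (⌊Int.fract ((a:ℝ) * w i) * Q⌋₊ : ℕ) = ⌊Int.fract ((b:ℝ) * w i) * Q⌋₊ :=
        congrArg Fin.val (congrFun hFab i)
      have h1 : (⌊Int.fract ((a:ℝ) * w i) * Q⌋₊ : ℝ) ≤ Int.fract ((a:ℝ) * w i) * Q :=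
        Nat.floor_le (mul_nonneg (Int.fract_nonneg _) hQR.le)
      have h2 : Int.fract ((a:ℝ) * w i) * Q < ⌊Int.fract ((a:ℝ) * w i) * Q⌋₊ + 1 :=
        Nat.lt_floor_add_one _
      have h3 : (⌊Int.fract ((b:ℝ) * w i) * Q⌋₊ : ℝ) ≤ Int.fract ((b:ℝ) * w i) * Q :=
        Nat.floor_le (mul_nonneg (Int.fract_nonneg _) hQR.le)
      have h4 : Int.fract ((b:ℝ) * w i) * Q < ⌊Int.fract ((b:ℝ) * w i) * Q⌋₊ + 1 :=
        Nat.lt_floor_add_one _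
      have hboxR : (⌊Int.fract ((a:ℝ) * w i) * Q⌋₊ : ℝ) = (⌊Int.fract ((b:ℝ) * w i) * Q⌋₊ : ℝ) := by
        exact_mod_cast hbox
      have hdiff : |Int.fract ((a:ℝ) * w i) - Int.fract ((b:ℝ) * w i)| < 1 / Q := by
        rw [abs_sub_lt_iff]
        constructor <;> rw [lt_div_iff₀ hQR] <;> nlinarith
      have heq : (⌊(b:ℝ) * w i⌋₊ : ℝ) - (⌊(a:ℝ) * w i⌋₊ : ℝ) - ((b:ℝ) - a) * w i
          = Int.fract ((a:ℝ) * w i) - Int.fract ((b:ℝ) * w i) := by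
        rw [hfa, hfb]; ring
      rw [hcast, hNcast]
      calc |(⌊(b:ℝ) * w i⌋₊ : ℝ) - (⌊(a:ℝ) * w i⌋₊ : ℝ) - ((b:ℝ) - a) * w i|
          = |Int.fract ((a:ℝ) * w i) - Int.fract ((b:ℝ) * w i)| := by rw [heq]
        _ < 1 / Q := hdiff
    · intro i j hij; dsimp only; rw [hij]
  have hpig : ∃ a ∈ Finset.range (Q ^ d + 1), ∃ b ∈ Finset.range (Q ^ d + 1), a ≠ b ∧ F a = F b := by
    apply Finset.exists_ne_map_eq_of_card_lt_of_maps_to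
    · rw [Finset.card_range, Finset.card_univ, Fintype.card_fun, Fintype.card_fin]
      exact Nat.lt_succ_self _
    · intro a _; exact Finset.mem_univ _
  obtain ⟨a, -, b, -, hab, hFab⟩ := hpig
  rcases hab.lt_or_gt with h | h
  · exact key a b h hFab
  · exact key b a h hFab.symm

/-- The Lévy–Prokhorov-type distance of the paper:
`d_L(μ, ν) = inf {ε > 0 | ∀ A, ν(A_ε) ≥ μ(A)}`, where `A_ε` is the open
`ε`-neighborhood of `A`. -/
noncomputable def levyDist {X : Type*} [PseudoMetricSpace X] [MeasurableSpace X]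
    (μ ν : Measure X) : ℝ :=
  sInf {ε : ℝ | 0 < ε ∧ ∀ A : Set X, μ A ≤ ν (Metric.thickening ε A)}

set_option maxHeartbeats 1000000 in
/-- Measured Marriage Theorem 14.2.2 (equivariant part): given Lipschitz maps
`f, g : Y → Z` with `d_L(f_*μ, g_*μ) ≤ β` and a free measure-preserving
isometry `σ` of `Y` of order 3, there is a nonempty finite set `Ỹ`
(realized as `Fin m`, `m > 0`), a map `p : Ỹ → Y`, bijections `φ` and `σ̃`
of `Ỹ` with `σ̃³ = id`, `p ∘ σ̃ = σ ∘ p` and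
`dist (f (p ỹ)) (g (p (φ ỹ))) ≤ 2β` for all `ỹ`. -/
theorem stmt10 {Y Z : Type*} [MetricSpace Y] [CompactSpace Y]
    [MeasurableSpace Y] [BorelSpace Y]
    [MetricSpace Z] [MeasurableSpace Z] [BorelSpace Z]
    (μ : Measure Y) [IsFiniteMeasure μ] (hμ : 0 < μ Set.univ)
    (f g : Y → Z) {Kf Kg : NNReal} (hf : LipschitzWith Kf f) (hg : LipschitzWith Kg g)
    {β : ℝ} (hβ : 0 < β) (hd : levyDist (μ.map f) (μ.map g) ≤ β)
    (σ : Y → Y) (hσiso : Isometry σ) (hσmp : Measure.map σ μ = μ)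
    (hσ3 : σ ∘ σ ∘ σ = id)
    (hfree : ∀ y : Y, σ y ≠ y ∧ σ (σ y) ≠ y) :
    ∃ m : ℕ, 0 < m ∧ ∃ (p : Fin m → Y) (φ σt : Equiv.Perm (Fin m)),
      (∀ i, σt (σt (σt i)) = i) ∧
      (∀ i, p (σt i) = σ (p i)) ∧
      ∀ i, dist (f (p i)) (g (p (φ i))) ≤ 2 * β := by
  classical
  have hσ3' : ∀ x : Y, σ (σ (σ x)) = x := fun x => congrFun hσ3 x
  have hYne : Nonempty Y := by
    by_contra h
    rw [not_nonempty_iff] at h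
    rw [Set.univ_eq_empty_iff.mpr h, measure_empty] at hμ
    exact lt_irrefl _ hμ
  have hfc : Continuous f := hf.continuous
  have hgc : Continuous g := hg.continuous
  have hσc : Continuous σ := hσiso.continuous
  have hfm : Measurable f := hfc.measurable
  have hgm : Measurable g := hgc.measurable
  have hσm : Measurable σ := hσc.measurable
  have hμfin : μ Set.univ ≠ ⊤ := measure_ne_top μ _
  set W := (μ Set.univ).toReal with hWdef
  have hW0 : 0 < W := ENNReal.toReal_pos hμ.ne' hμfin
  -- Step 1: choose ε with the thickening property and ε < 3/2 β
  set Sset := {ε : ℝ | 0 < ε ∧ ∀ A : Set Z, (μ.map f) A ≤ (μ.map g) (Metric.thickening ε A)}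
    with hSset
  have hSne : Sset.Nonempty := by
    set K := closure (Set.range f ∪ Set.range g) with hK
    have hKb : Bornology.IsBounded K :=
      (((isCompact_range hfc).union (isCompact_range hgc)).isBounded).closure
    refine ⟨Metric.diam K + 1, ⟨by positivity, ?_⟩⟩
    intro A
    by_cases hA : (A ∩ closure (Set.range f)).Nonempty
    · obtain ⟨z, hzA, hzf⟩ := hA
      have h1 : (μ.map f) A ≤ μ Set.univ := by
        have := measure_mono (μ := μ.map f) (Set.subset_univ A)
        rwa [Measure.map_apply hfm MeasurableSet.univ, Set.preimage_univ] at this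
      have h2 : g ⁻¹' (Metric.thickening (Metric.diam K + 1) A) = Set.univ := by
        ext x
        simp only [Set.mem_preimage, Set.mem_univ, iff_true]
        rw [Metric.mem_thickening_iff]
        refine ⟨z, hzA, ?_⟩
        have hgx : g x ∈ K := subset_closure (Or.inr (Set.mem_range_self x))
        have hz : z ∈ K := closure_mono Set.subset_union_left hzf
        have := Metric.dist_le_diam_of_mem hKb hgx hz
        linarith
      calc (μ.map f) A ≤ μ Set.univ := h1
        _ = μ (g ⁻¹' (Metric.thickening (Metric.diam K + 1) A)) := by rw [h2]
        _ ≤ (μ.map g) (Metric.thickening (Metric.diam K + 1) A) :=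
            Measure.le_map_apply hgm.aemeasurable _
    · have hsub : A ⊆ (closure (Set.range f))ᶜ := by
        intro x hx
        by_contra hc
        rw [Set.notMem_compl_iff] at hc
        exact hA ⟨x, hx, hc⟩
      have : (μ.map f) A ≤ (μ.map f) (closure (Set.range f))ᶜ := measure_mono hsub
      rw [Measure.map_apply hfm isClosed_closure.measurableSet.compl] at this
      have hpre : f ⁻¹' (closure (Set.range f))ᶜ = ∅ := by
        ext x
        simp only [Set.mem_preimage, Set.mem_compl_iff, Set.mem_empty_iff_false, iff_false,
          not_not]
        exact subset_closure (Set.mem_range_self x)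
      rw [hpre, measure_empty] at this
      exact le_trans (le_trans this zero_le) (le_refl _)
  have hbdd : BddBelow Sset := ⟨0, fun x hx => hx.1.le⟩
  have hd' : sInf Sset ≤ β := hd
  obtain ⟨ε, hεS, hεβ⟩ : ∃ ε ∈ Sset, ε < 3/2 * β :=
    (csInf_lt_iff hbdd hSne).mp (lt_of_le_of_lt hd' (by linarith))
  obtain ⟨hε0, hεA⟩ := hεS
  have hslack : 0 < 2*β - ε := by linarith
  -- Step 2: c1, δ
  obtain ⟨c1, hc10, hc1⟩ : ∃ c, 0 < c ∧ ∀ x : Y, c ≤ dist (σ x) x := by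
    obtain ⟨x₀, -, hx₀⟩ := isCompact_univ.exists_isMinOn (Set.univ_nonempty)
      ((hσc.dist continuous_id).continuousOn (s := Set.univ))
    exact ⟨dist (σ x₀) x₀, dist_pos.mpr (hfree x₀).1,
      fun x => hx₀ (Set.mem_univ x)⟩
  set k : ℝ := (Kf : ℝ) + (Kg : ℝ) with hk
  have hk0 : 0 ≤ k := by positivity
  obtain ⟨δ, hδ0, h2δc1, h2δk⟩ : ∃ δ : ℝ, 0 < δ ∧ 2*δ ≤ c1 ∧ k*(2*δ) ≤ 2*β - ε := by
    refine ⟨min c1 ((2*β - ε)/(k+1)) / 2, ?_, ?_, ?_⟩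
    · have : 0 < (2*β - ε)/(k+1) := by positivity
      have := lt_min hc10 this
      linarith
    · have := min_le_left c1 ((2*β - ε)/(k+1))
      linarith
    · have h1 : 2*(min c1 ((2*β - ε)/(k+1)) / 2) ≤ (2*β - ε)/(k+1) := by
        have := min_le_right c1 ((2*β - ε)/(k+1))
        linarith
      have h2 := mul_le_mul_of_nonneg_left h1 hk0
      have h3 : k * ((2*β - ε)/(k+1)) ≤ 2*β - ε := by
        rw [mul_div_assoc', div_le_iff₀ (by positivity)]
        nlinarith
      linarith
  have hkey : ε + k * (2*δ) ≤ 2*β := by linarith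
  -- Step 3: finite net and measurable partition into small pieces
  obtain ⟨s, hs⟩ : ∃ s : Finset Y, Set.univ ⊆ ⋃ x ∈ s, Metric.ball x δ := by
    obtain ⟨s, hs⟩ := isCompact_univ.elim_finite_subcover (fun x : Y => Metric.ball x δ)
      (fun _ => Metric.isOpen_ball) (fun x _ => Set.mem_iUnion.mpr ⟨x, Metric.mem_ball_self hδ0⟩)
    exact ⟨s, hs⟩
  set I := {x : Y // x ∈ s} with hI
  set r : I → ℕ := fun i => (Fintype.equivFin I i : ℕ) with hr
  have hrinj : Function.Injective r := fun i j h => (Fintype.equivFin I).injective (Fin.ext h)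
  set C : I → Set Y := fun i =>
    Metric.ball i.1 δ \ ⋃ (j : I) (_ : r j < r i), Metric.ball j.1 δ with hC
  have hCmeas : ∀ i, MeasurableSet (C i) := fun i =>
    (Metric.isOpen_ball.measurableSet).diff (MeasurableSet.iUnion fun j =>
      MeasurableSet.iUnion fun _ => Metric.isOpen_ball.measurableSet)
  have hCsub : ∀ i, C i ⊆ Metric.ball i.1 δ := fun i => Set.diff_subset
  have hCcover : ∀ x : Y, ∃ i, x ∈ C i := by
    intro x
    have hx := hs (Set.mem_univ x)
    rw [Set.mem_iUnion₂] at hx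
    obtain ⟨z, hzs, hxz⟩ := hx
    set F : Finset I := Finset.univ.filter (fun i : I => x ∈ Metric.ball i.1 δ) with hF
    have hFne : F.Nonempty := ⟨⟨z, hzs⟩, Finset.mem_filter.mpr ⟨Finset.mem_univ _, hxz⟩⟩
    obtain ⟨i₀, hi₀F, hi₀min⟩ : ∃ i₀ ∈ F, ∀ j ∈ F, r i₀ ≤ r j := F.exists_min_image r hFne
    refine ⟨i₀, (Finset.mem_filter.mp hi₀F).2, ?_⟩
    intro hmem
    rw [Set.mem_iUnion₂] at hmem
    obtain ⟨j, hj, hxj⟩ := hmem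
    have : j ∈ F := Finset.mem_filter.mpr ⟨Finset.mem_univ _, hxj⟩
    exact absurd (hi₀min j this) (not_le.mpr hj)
  have hCuniq : ∀ x i j, x ∈ C i → x ∈ C j → i = j := by
    intro x i j hi hj
    by_contra hne
    have hrne : r i ≠ r j := fun h => hne (hrinj h)
    rcases hrne.lt_or_gt with h | h
    · exact hj.2 (Set.mem_iUnion₂.mpr ⟨i, h, hi.1⟩)
    · exact hi.2 (Set.mem_iUnion₂.mpr ⟨j, h, hj.1⟩)
  -- I3 and the rotation
  set ρ : I × I × I → I × I × I := fun J => (J.2.1, J.2.2, J.1) with hρ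
  have hρ3 : ∀ J, ρ (ρ (ρ J)) = J := fun J => rfl
  set D : I × I × I → Set Y := fun J =>
    {x | x ∈ C J.1 ∧ σ x ∈ C J.2.1 ∧ σ (σ x) ∈ C J.2.2} with hD
  have hDmeas : ∀ J, MeasurableSet (D J) := by
    intro J
    have hEq : D J = C J.1 ∩ (σ ⁻¹' C J.2.1 ∩ (σ ∘ σ) ⁻¹' C J.2.2) := by
      ext x
      simp only [hD, Set.mem_setOf_eq, Set.mem_inter_iff, Set.mem_preimage, Function.comp_apply]
    rw [hEq]
    exact (hCmeas _).inter (((hσm (hCmeas _))).inter ((hσm.comp hσm) (hCmeas _)))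
  have hDρ : ∀ J x, x ∈ D J → σ x ∈ D (ρ J) := by
    intro J x hx
    refine ⟨hx.2.1, hx.2.2, ?_⟩
    show σ (σ (σ x)) ∈ C J.1
    rw [hσ3' x]
    exact hx.1
  have hDcover : ∀ x : Y, ∃ J, x ∈ D J := by
    intro x
    obtain ⟨a, ha⟩ := hCcover x
    obtain ⟨b, hb⟩ := hCcover (σ x)
    obtain ⟨c, hc⟩ := hCcover (σ (σ x))
    exact ⟨(a, b, c), ha, hb, hc⟩
  have hDuniq : ∀ x J K, x ∈ D J → x ∈ D K → J = K := by
    intro x J K hJ hK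
    have h1 := hCuniq x _ _ hJ.1 hK.1
    have h2 := hCuniq (σ x) _ _ hJ.2.1 hK.2.1
    have h3 := hCuniq (σ (σ x)) _ _ hJ.2.2 hK.2.2
    exact Prod.ext h1 (Prod.ext h2 h3)
  have hDdiam : ∀ J x x', x ∈ D J → x' ∈ D J → dist x x' < 2*δ := by
    intro J x x' hx hx'
    have h1 := hCsub J.1 hx.1
    have h2 := hCsub J.1 hx'.1
    rw [Metric.mem_ball] at h1 h2
    calc dist x x' ≤ dist x J.1.1 + dist J.1.1 x' := dist_triangle _ _ _
      _ < 2*δ := by rw [dist_comm (J.1.1 : Y) x']; linarith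
  have hρfix : ∀ J, (D J).Nonempty → ρ J ≠ J := by
    rintro J ⟨x, hx⟩ hJ
    have h21 : J.2.1 = J.1 := congrArg Prod.fst hJ
    have hx1 := hx.1
    have hx2 := hx.2.1
    rw [h21] at hx2
    have hb1 := hCsub _ hx1
    have hb2 := hCsub _ hx2
    rw [Metric.mem_ball] at hb1 hb2
    have htri : dist (σ x) x ≤ dist (σ x) J.1.1 + dist J.1.1 x := dist_triangle _ _ _
    have hcx := hc1 x
    rw [dist_comm (J.1.1 : Y) x] at htri
    linarith
  -- weights
  set w : I × I × I → ℝ := fun J => (μ (D J)).toReal with hw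
  have hw0 : ∀ J, 0 ≤ w J := fun J => ENNReal.toReal_nonneg
  have hDfin : ∀ J, μ (D J) ≠ ⊤ := fun J => measure_ne_top μ _
  have hwρ : ∀ J, w (ρ J) = w J := by
    intro J
    have hpre : σ ⁻¹' (D (ρ J)) = D J := by
      ext x
      constructor
      · intro hx
        have h2 := hDρ _ _ hx
        have h3 := hDρ _ _ h2
        rw [hρ3 J] at h3
        rwa [hσ3' x] at h3
      · intro hx; exact hDρ _ _ hx
    have hμeq : μ (D (ρ J)) = μ (D J) := by
      conv_lhs => rw [← hσmp]
      rw [Measure.map_apply hσm (hDmeas _), hpre]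
    exact congrArg ENNReal.toReal hμeq
  have hwsum : ∑ J : I × I × I, w J = W := by
    have hU : ⋃ J ∈ (Finset.univ : Finset (I × I × I)), D J = Set.univ := by
      apply Set.eq_univ_of_forall
      intro x
      obtain ⟨J, hJ⟩ := hDcover x
      exact Set.mem_biUnion (Finset.mem_univ J) hJ
    have hmeq : μ Set.univ = ∑ J : I × I × I, μ (D J) := by
      rw [← hU, measure_biUnion_finset ?_ (fun J _ => hDmeas J)]
      intro J _ K _ hne
      exact Set.disjoint_left.mpr (fun x hxJ hxK => hne (hDuniq x J K hxJ hxK))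
    rw [hWdef, hmeq, ENNReal.toReal_sum (fun J _ => hDfin J)]
  -- nonemptiness transfer and equivariant representatives
  have hNe1 : ∀ J, (D J).Nonempty → (D (ρ J)).Nonempty := fun J h =>
    h.elim fun x hx => ⟨σ x, hDρ J x hx⟩
  set pt : I × I × I → Y := fun J =>
    if h : (D J).Nonempty then h.some else Classical.arbitrary Y with hptdef
  have hpt : ∀ J, (D J).Nonempty → pt J ∈ D J := by
    intro J h
    rw [hptdef]; dsimp only; rw [dif_pos h]; exact h.some_mem
  set e3 := Fintype.equivFin (I × I × I) with he3
  set o : I × I × I → Finset (I × I × I) := fun J => {J, ρ J, ρ (ρ J)} with ho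
  have hone : ∀ J, (o J).Nonempty := fun J => ⟨J, by simp [ho]⟩
  set M : I × I × I → I × I × I := fun J =>
    e3.symm (((o J).image e3).min' ((hone J).image e3)) with hM
  have hoρ : ∀ J, o (ρ J) = o J := by
    intro J
    rw [ho]; dsimp only
    ext K
    simp only [Finset.mem_insert, Finset.mem_singleton]
    rw [hρ3 J]
    tauto
  have hmin'congr : ∀ (A B : Finset (Fin (Fintype.card (I × I × I)))) (hA : A.Nonempty)
      (hB : B.Nonempty), A = B → A.min' hA = B.min' hB := by
    rintro A B hA hB rfl; rfl
  have hMρ : ∀ J, M (ρ J) = M J := by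
    intro J
    rw [hM]; dsimp only
    exact congrArg e3.symm (hmin'congr _ _ _ _ (congrArg (Finset.image e3) (hoρ J)))
  have hMmem : ∀ J, M J = J ∨ M J = ρ J ∨ M J = ρ (ρ J) := by
    intro J
    have h := Finset.min'_mem ((o J).image e3) ((hone J).image e3)
    rw [Finset.mem_image] at h
    obtain ⟨K, hK, hKe⟩ := h
    have hMK : M J = K := by rw [hM]; dsimp only; rw [← hKe]; exact e3.symm_apply_apply K
    rw [hMK]
    simpa [ho, Finset.mem_insert, Finset.mem_singleton] using hK
  set y : I × I × I → Y := fun J =>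
    if M J = J then pt (M J) else if ρ (M J) = J then σ (pt (M J)) else σ (σ (pt (M J))) with hy
  have hd2 : ∀ J, (D J).Nonempty → ρ (ρ J) ≠ J := by
    intro J h hc
    have h' := congrArg ρ hc
    rw [hρ3 J] at h'
    exact hρfix J h h'.symm
  have hd3 : ∀ J, (D J).Nonempty → ρ (ρ J) ≠ ρ J := by
    intro J h hc
    have h' := congrArg ρ hc
    rw [hρ3 J] at h'
    exact hd2 J h h'.symm
  have hyMem : ∀ J, (D J).Nonempty → y J ∈ D J := by
    intro J h
    rcases hMmem J with h1 | h1 | h1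
    · rw [hy]; dsimp only; rw [if_pos h1, h1]; exact hpt J h
    · have hne1 : ¬ (M J = J) := by rw [h1]; exact hρfix J h
      have hne2 : ¬ (ρ (M J) = J) := by rw [h1]; exact hd2 J h
      rw [hy]; dsimp only; rw [if_neg hne1, if_neg hne2, h1]
      have hptm := hpt _ (hNe1 J h)
      have h2 := hDρ _ _ (hDρ _ _ hptm)
      rwa [hρ3 J] at h2
    · have hne1 : ¬ (M J = J) := by rw [h1]; exact hd2 J h
      have hp2 : ρ (M J) = J := by rw [h1]
      rw [hy]; dsimp only; rw [if_neg hne1, if_pos hp2, h1]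
      have hptm := hpt _ (hNe1 _ (hNe1 _ h))
      have h2 := hDρ _ _ hptm
      rwa [hρ3 J] at h2
  have hyρ : ∀ J, (D J).Nonempty → y (ρ J) = σ (y J) := by
    intro J h
    rcases hMmem J with h1 | h1 | h1
    · have hMρJ : M (ρ J) = J := by rw [hMρ J, h1]
      have hna : ¬ (M (ρ J) = ρ J) := by rw [hMρJ]; exact fun hc => hρfix J h hc.symm
      have hb : ρ (M (ρ J)) = ρ J := by rw [hMρJ]
      rw [hy]; dsimp only
      rw [if_pos h1, if_neg hna, if_pos hb, hMρJ, h1]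
    · have hMρJ : M (ρ J) = ρ J := by rw [hMρ J, h1]
      have hnb : ¬ (M J = J) := by rw [h1]; exact hρfix J h
      have hnc : ¬ (ρ (M J) = J) := by rw [h1]; exact hd2 J h
      rw [hy]; dsimp only
      rw [if_pos hMρJ, if_neg hnb, if_neg hnc, hMρJ, h1]
      rw [hσ3']
    · have hMρJ : M (ρ J) = ρ (ρ J) := by rw [hMρ J, h1]
      have hna : ¬ (M (ρ J) = ρ J) := by rw [hMρJ]; exact hd3 J h
      have hnb : ¬ (ρ (M (ρ J)) = ρ J) := by
        rw [hMρJ, hρ3 J]; exact fun hc => hρfix J h hc.symm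
      have hnc : ¬ (M J = J) := by rw [h1]; exact hd2 J h
      have hdd : ρ (M J) = J := by rw [h1]
      rw [hy]; dsimp only
      rw [if_neg hna, if_neg hnb, if_neg hnc, if_pos hdd, hMρJ, h1]
  -- Step 4: the measured Hall inequality
  set T : Finset (I × I × I) → Finset (I × I × I) := fun S =>
    Finset.univ.filter
      (fun J' => (D J').Nonempty ∧ ∃ J ∈ S, dist (f (y J)) (g (y J')) ≤ 2*β) with hT
  have hallR : ∀ S : Finset (I × I × I), (∀ J ∈ S, (D J).Nonempty) →
      ∑ J ∈ S, w J ≤ ∑ J ∈ T S, w J := by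
    intro S hSne'
    have hdisj : ∀ (S' : Finset (I × I × I)),
        (S' : Set (I × I × I)).PairwiseDisjoint D := by
      intro S' J _ K _ hne
      exact Set.disjoint_left.mpr (fun x hxJ hxK => hne (hDuniq x J K hxJ hxK))
    have hchain : ∑ J ∈ S, μ (D J) ≤ ∑ J ∈ T S, μ (D J) := by
      have hU1 : ∑ J ∈ S, μ (D J) = μ (⋃ J ∈ S, D J) :=
        (measure_biUnion_finset (hdisj S) (fun J _ => hDmeas J)).symm
      set A : Set Z := f '' (⋃ J ∈ S, D J) with hA
      have h1 : μ (⋃ J ∈ S, D J) ≤ (μ.map f) A :=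
        Measure.le_map_apply_image hfm.aemeasurable _
      have h2 : (μ.map f) A ≤ (μ.map g) (Metric.thickening ε A) := hεA A
      have h3 : (μ.map g) (Metric.thickening ε A) = μ (g ⁻¹' Metric.thickening ε A) :=
        Measure.map_apply hgm Metric.isOpen_thickening.measurableSet
      have h4 : g ⁻¹' Metric.thickening ε A ⊆ ⋃ J' ∈ T S, D J' := by
        intro x hx
        obtain ⟨J', hxJ'⟩ := hDcover x
        have hJ'ne : (D J').Nonempty := ⟨x, hxJ'⟩
        rw [Set.mem_preimage, Metric.mem_thickening_iff] at hx
        obtain ⟨z, hzA, hdz⟩ := hx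
        rw [hA] at hzA
        obtain ⟨u, huU, hu⟩ := hzA
        rw [Set.mem_iUnion₂] at huU
        obtain ⟨J, hJS, huJ⟩ := huU
        have hedge : dist (f (y J)) (g (y J')) ≤ 2*β := by
          have e1 : dist (f (y J)) (f u) ≤ (Kf:ℝ) * (2*δ) := by
            have hl := hf.dist_le_mul (y J) u
            have hdd := hDdiam J _ _ (hyMem J (hSne' J hJS)) huJ
            nlinarith [NNReal.coe_nonneg Kf]
          have e2 : dist (g x) (g (y J')) ≤ (Kg:ℝ) * (2*δ) := by
            have hl := hg.dist_le_mul x (y J')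
            have hdd := hDdiam J' _ _ hxJ' (hyMem J' hJ'ne)
            nlinarith [NNReal.coe_nonneg Kg]
          have tri : dist (f (y J)) (g (y J')) ≤
              dist (f (y J)) (f u) + dist (f u) (g x) + dist (g x) (g (y J')) :=
            dist_triangle4 _ _ _ _
          have hzd : dist (f u) (g x) < ε := by
            rw [← hu] at hdz
            rw [dist_comm]
            exact hdz
          rw [hk] at hkey
          linarith
        have hJ'T : J' ∈ T S := by
          rw [hT]; dsimp only
          rw [Finset.mem_filter]
          exact ⟨Finset.mem_univ _, hJ'ne, J, hJS, hedge⟩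
        exact Set.mem_biUnion hJ'T hxJ'
      have h5 : μ (g ⁻¹' Metric.thickening ε A) ≤ ∑ J' ∈ T S, μ (D J') := by
        calc μ (g ⁻¹' Metric.thickening ε A) ≤ μ (⋃ J' ∈ T S, D J') := measure_mono h4
          _ ≤ ∑ J' ∈ T S, μ (D J') := measure_biUnion_finset_le _ _
      calc ∑ J ∈ S, μ (D J) = μ (⋃ J ∈ S, D J) := hU1
        _ ≤ (μ.map f) A := h1
        _ ≤ (μ.map g) (Metric.thickening ε A) := h2
        _ = μ (g ⁻¹' Metric.thickening ε A) := h3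
        _ ≤ ∑ J' ∈ T S, μ (D J') := h5
    have hSfin : (∑ J ∈ S, μ (D J)) ≠ ⊤ :=
      (ENNReal.sum_lt_top.mpr (fun J _ => (hDfin J).lt_top)).ne
    have hTfin : (∑ J ∈ T S, μ (D J)) ≠ ⊤ :=
      (ENNReal.sum_lt_top.mpr (fun J _ => (hDfin J).lt_top)).ne
    have hres := (ENNReal.toReal_le_toReal hSfin hTfin).mpr hchain
    rwa [ENNReal.toReal_sum (fun J _ => hDfin J),
      ENNReal.toReal_sum (fun J _ => hDfin J)] at hres
  -- Step 5: integer weights via simultaneous approximation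
  set dcard := Fintype.card (I × I × I) with hdcard
  obtain ⟨Q, hQgt⟩ := exists_nat_gt (max (2*(dcard:ℝ)) ((dcard:ℝ)/W))
  have hQ2d : (2*(dcard:ℝ)) < Q := lt_of_le_of_lt (le_max_left _ _) hQgt
  have hQdW : (dcard:ℝ)/W < Q := lt_of_le_of_lt (le_max_right _ _) hQgt
  have hQ0 : 0 < Q := by
    by_contra hc
    push_neg at hc
    interval_cases Q
    · norm_num at hQ2d
      have : (0:ℝ) ≤ (dcard:ℝ) := Nat.cast_nonneg _
      linarith
  have hQR : (0:ℝ) < Q := by exact_mod_cast hQ0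
  obtain ⟨N, hN0, n, hnapp, hnsame⟩ := simul_approx w hw0 Q hQ0
  have hnρ : ∀ J, n (ρ J) = n J := fun J => hnsame _ _ (hwρ J)
  have hb1 : ∀ J, (n J:ℝ) ≤ N * w J + 1/Q := by
    intro J
    have := abs_lt.mp (hnapp J)
    linarith [this.2]
  have hb2 : ∀ J, (N:ℝ) * w J ≤ (n J:ℝ) + 1/Q := by
    intro J
    have := abs_lt.mp (hnapp J)
    linarith [this.1]
  have hnNe : ∀ J, n J ≠ 0 → (D J).Nonempty := by
    intro J hn
    by_contra hc
    rw [Set.not_nonempty_iff_eq_empty] at hc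
    have hwJ : w J = 0 := by
      rw [hw]; dsimp only; rw [hc, measure_empty]; rfl
    have h1 : (1:ℝ)/Q ≤ 1 := by
      rw [div_le_one hQR]
      exact_mod_cast hQ0
    have h2 := (abs_lt.mp (hnapp J)).2
    rw [hwJ, mul_zero, sub_zero] at h2
    have hge : (1:ℝ) ≤ (n J : ℝ) := by exact_mod_cast Nat.one_le_iff_ne_zero.mpr hn
    linarith
  have hcardle : ∀ S : Finset (I × I × I), (S.card : ℝ) ≤ (dcard:ℝ) := by
    intro S
    rw [hdcard]
    exact_mod_cast (Finset.card_le_univ S).trans_eq Finset.card_univ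
  have hallN : ∀ S : Finset (I × I × I), (∀ J ∈ S, (D J).Nonempty) →
      ∑ J ∈ S, n J ≤ ∑ J ∈ T S, n J := by
    intro S hSne'
    have hr := hallR S hSne'
    have e1 : ((∑ J ∈ S, n J : ℕ) : ℝ) ≤ (N:ℝ) * (∑ J ∈ S, w J) + S.card * (1/Q) := by
      push_cast
      calc ∑ J ∈ S, (n J:ℝ) ≤ ∑ J ∈ S, ((N:ℝ) * w J + 1/Q) :=
            Finset.sum_le_sum (fun J _ => hb1 J)
        _ = (N:ℝ) * (∑ J ∈ S, w J) + S.card * (1/Q) := by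
            rw [Finset.sum_add_distrib, Finset.sum_const, nsmul_eq_mul, Finset.mul_sum]
    have e2 : (N:ℝ) * (∑ J ∈ S, w J) ≤ (N:ℝ) * (∑ J ∈ T S, w J) :=
      mul_le_mul_of_nonneg_left hr (Nat.cast_nonneg N)
    have e3 : (N:ℝ) * (∑ J ∈ T S, w J) ≤ ((∑ J ∈ T S, n J : ℕ) : ℝ) + (T S).card * (1/Q) := by
      push_cast
      rw [Finset.mul_sum]
      calc ∑ J ∈ T S, (N:ℝ) * w J ≤ ∑ J ∈ T S, ((n J:ℝ) + 1/Q) :=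
            Finset.sum_le_sum (fun J _ => hb2 J)
        _ = _ := by
            rw [Finset.sum_add_distrib, Finset.sum_const, nsmul_eq_mul]
    have hc1 : (S.card:ℝ) * (1/Q) ≤ (dcard:ℝ) * (1/Q) :=
      mul_le_mul_of_nonneg_right (hcardle S) (by positivity)
    have hc2 : ((T S).card:ℝ) * (1/Q) ≤ (dcard:ℝ) * (1/Q) :=
      mul_le_mul_of_nonneg_right (hcardle (T S)) (by positivity)
    have hlt1 : 2*(dcard:ℝ) * (1/Q) < 1 := by
      rw [mul_one_div, div_lt_one hQR]
      linarith
    have efin : ((∑ J ∈ S, n J : ℕ) : ℝ) < ((∑ J ∈ T S, n J : ℕ) : ℝ) + 1 := by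
      linarith
    have : (∑ J ∈ S, n J) < (∑ J ∈ T S, n J) + 1 := by exact_mod_cast efin
    omega
  -- Step 6: build the finite set with multiplicities
  set ι := Σ J : I × I × I, Fin (n J) with hι
  have hx1ne : ∀ x : ι, (D x.1).Nonempty := fun x => hnNe x.1 x.2.pos.ne'
  have hcs : Fintype.card ι = ∑ J : I × I × I, n J := by
    show Fintype.card (Σ J : I × I × I, Fin (n J)) = _
    simp [Fintype.card_sigma, Fintype.card_fin]
  have hcardι : 0 < Fintype.card ι := by
    have hsumR : (0:ℝ) < ∑ J : I × I × I, (n J : ℝ) := by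
      have hstep : ∑ J : I × I × I, ((N:ℝ) * w J - 1/Q) ≤ ∑ J : I × I × I, (n J:ℝ) :=
        Finset.sum_le_sum (fun J _ => by have := hb2 J; linarith)
      rw [Finset.sum_sub_distrib, Finset.sum_const, nsmul_eq_mul, ← Finset.mul_sum,
        hwsum, Finset.card_univ] at hstep
      have hNW : W ≤ (N:ℝ)*W := le_mul_of_one_le_left hW0.le (by exact_mod_cast hN0)
      have hdq : (dcard:ℝ)*(1/Q) < W := by
        rw [mul_one_div, div_lt_iff₀ hQR]
        have := (div_lt_iff₀ hW0).mp hQdW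
        linarith [mul_comm W (Q:ℝ)]
      rw [hdcard] at hdq
      linarith
    have hsumn : 0 < ∑ J : I × I × I, n J := by
      have : (0:ℝ) < ((∑ J : I × I × I, n J : ℕ):ℝ) := by push_cast; exact hsumR
      exact_mod_cast this
    rw [hcs]
    exact hsumn
  set st0 : ι → ι := fun x => ⟨ρ x.1, ⟨(x.2:ℕ), by rw [hnρ x.1]; exact x.2.isLt⟩⟩ with hst0
  have hst3 : ∀ x : ι, st0 (st0 (st0 x)) = x := by
    rintro ⟨J, t⟩
    exact sigmaFinEq (hρ3 J) rfl
  have hpeq : ∀ x : ι, y ((st0 x).1) = σ (y x.1) := fun x => hyρ x.1 (hx1ne x)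
  -- Hall's theorem
  set t : ι → Finset ι := fun x =>
    Finset.univ.filter (fun x' => dist (f (y x.1)) (g (y x'.1)) ≤ 2*β) with ht
  have hHall : ∀ s' : Finset ι, s'.card ≤ (s'.biUnion t).card := by
    intro s'
    set S : Finset (I × I × I) := s'.image Sigma.fst with hS
    have hSne' : ∀ J ∈ S, (D J).Nonempty := by
      intro J hJ
      rw [hS, Finset.mem_image] at hJ
      obtain ⟨x, hx, hx1⟩ := hJ
      rw [← hx1]
      exact hx1ne x
    have h1 : s' ⊆ S.sigma (fun J => (Finset.univ : Finset (Fin (n J)))) := by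
      intro x hx
      rw [Finset.mem_sigma]
      exact ⟨Finset.mem_image_of_mem _ hx, Finset.mem_univ _⟩
    have h2 : s'.card ≤ ∑ J ∈ S, n J := by
      have hh := Finset.card_le_card h1
      rw [Finset.card_sigma] at hh
      simpa only [Finset.card_univ, Fintype.card_fin] using hh
    have h3 : (T S).sigma (fun J => (Finset.univ : Finset (Fin (n J)))) ⊆ s'.biUnion t := by
      intro x hx
      rw [Finset.mem_sigma] at hx
      obtain ⟨hxT, -⟩ := hx
      rw [hT] at hxT
      dsimp only at hxT
      rw [Finset.mem_filter] at hxT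
      obtain ⟨-, -, J, hJS, hedge⟩ := hxT
      rw [hS, Finset.mem_image] at hJS
      obtain ⟨x₀, hx₀s, hx₀1⟩ := hJS
      rw [Finset.mem_biUnion]
      refine ⟨x₀, hx₀s, ?_⟩
      rw [ht]
      dsimp only
      rw [Finset.mem_filter]
      refine ⟨Finset.mem_univ _, ?_⟩
      rw [hx₀1]
      exact hedge
    have h4 : ∑ J ∈ T S, n J ≤ (s'.biUnion t).card := by
      have hh := Finset.card_le_card h3
      rw [Finset.card_sigma] at hh
      simpa only [Finset.card_univ, Fintype.card_fin] using hh
    exact le_trans h2 (le_trans (hallN S hSne') h4)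
  obtain ⟨Mf, hMinj, hMt⟩ := (Finset.all_card_le_biUnion_card_iff_exists_injective t).mp hHall
  have hMbij : Function.Bijective Mf := (Finite.injective_iff_bijective).mp hMinj
  set φι : Equiv.Perm ι := Equiv.ofBijective Mf hMbij with hφι
  set σtι : Equiv.Perm ι := ⟨st0, st0 ∘ st0, fun x => hst3 x, fun x => hst3 x⟩ with hσtι
  have hst3' : ∀ x : ι, σtι (σtι (σtι x)) = x := fun x => hst3 x
  have hpeq' : ∀ x : ι, y ((σtι x).1) = σ (y x.1) := fun x => hpeq x
  have hedge' : ∀ x : ι, dist (f (y x.1)) (g (y ((φι x).1))) ≤ 2*β := by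
    intro x
    have hh := hMt x
    rw [ht] at hh
    dsimp only at hh
    rw [Finset.mem_filter] at hh
    exact hh.2
  refine ⟨Fintype.card ι, hcardι, fun i => y (((Fintype.equivFin ι).symm i).1),
    (Fintype.equivFin ι).permCongr φι, (Fintype.equivFin ι).permCongr σtι, ?_, ?_, ?_⟩
  · intro i
    simp only [Equiv.permCongr_apply, Equiv.symm_apply_apply]
    rw [hst3' ((Fintype.equivFin ι).symm i)]
    exact (Fintype.equivFin ι).apply_symm_apply i
  · intro i
    simp only [Equiv.permCongr_apply, Equiv.symm_apply_apply]
    exact hpeq' ((Fintype.equivFin ι).symm i)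
  · intro i
    simp only [Equiv.permCongr_apply, Equiv.symm_apply_apply]
    exact hedge' ((Fintype.equivFin ι).symm i)
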